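/- There exists an F_σ set U ⊆ ω^ω × 2^ω that is universal for the meager ideal on Cantor space: every section U_x is meager in 2^ω and every meager subset of 2^ω is contained in some section U_x. -/

import Mathlib

open Set

/-- surjective enumeration of finite binary strings -/
noncomputable def enumList (n : ℕ) : List Bool := (Encodable.decode (α := List Bool) n).getD []

lemma enumList_surj (l : List Bool) : enumList (Encodable.encode l) = l := by
  simp [enumList]

/-- `y` extends the finite string `l`. -/
def ExtL (l : List Bool) (y : ℕ → Bool) : Prop := ∀ i : Fin l.length, y i = l.get i

/-- the cylinder of a string -/
def cyl (l : List Bool) : Set (ℕ → Bool) := {y | ExtL l y}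

lemma isOpen_cyl (l : List Bool) : IsOpen (cyl l) := by
  have : cyl l = ⋂ i : Fin l.length, {y : ℕ → Bool | y i = l.get i} := by
    ext y; simp [cyl, ExtL, Set.mem_iInter]
  rw [this]
  refine isOpen_iInter_of_finite fun i => ?_
  have : {y : ℕ → Bool | y i = l.get i} = (fun y : ℕ → Bool => y i) ⁻¹' {l.get i} := by
    ext y; simp
  rw [this]
  exact (continuous_apply (i : ℕ)).isOpen_preimage _ (isOpen_discrete _)

/-- first `N` values of `y` as a list -/
def init (y : ℕ → Bool) (N : ℕ) : List Bool := List.ofFn (fun i : Fin N => y i)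

lemma extL_init (y : ℕ → Bool) (N : ℕ) : ExtL (init y N) y := by
  intro i
  show y i = (init y N)[i.1]'i.2
  simp [init]

lemma cyl_init_subset {V : Set (ℕ → Bool)} (hV : IsOpen V) {y : ℕ → Bool} (hy : y ∈ V) :
    ∃ N, cyl (init y N) ⊆ V := by
  rw [isOpen_pi_iff] at hV
  obtain ⟨I, u, hu, hsub⟩ := hV y hy
  refine ⟨I.sup id + 1, fun z hz => hsub ?_⟩
  intro i hi
  have hlen : (init y (I.sup id + 1)).length = I.sup id + 1 := by simp [init]
  have hilt : i < (init y (I.sup id + 1)).length := by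
    rw [hlen]; exact Nat.lt_succ_of_le (Finset.le_sup (f := id) hi)
  have := hz ⟨i, hilt⟩
  simp only [init, List.get_ofFn] at this
  simp only [this]
  simpa using (hu i hi).2

/-- canonical point extending a list -/
def pt (l : List Bool) (i : ℕ) : Bool := if h : i < l.length then l.get ⟨i, h⟩ else false

lemma extL_pt (l : List Bool) : ExtL l (pt l) := by
  intro i; simp [pt, i.isLt]

lemma extL_append_left {s t : List Bool} {z : ℕ → Bool} (h : ExtL (s ++ t) z) : ExtL s z := by
  intro i
  have hi : (i : ℕ) < (s ++ t).length := by
    simp only [List.length_append]; exact lt_of_lt_of_le i.isLt (Nat.le_add_right _ _)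
  have := h ⟨i, hi⟩
  simpa [List.getElem_append_left i.isLt] using this

lemma cyl_init_mono {y : ℕ → Bool} {N N' : ℕ} (h : N ≤ N') :
    cyl (init y N') ⊆ cyl (init y N) := by
  intro z hz i
  have hi : (i : ℕ) < (init y N').length := by
    simp only [init, List.length_ofFn]
    exact lt_of_lt_of_le (by simpa [init] using i.isLt) h
  have := hz ⟨i, hi⟩
  show z i = (init y N)[i.1]'i.2
  simpa [init] using this

lemma append_eq_init {s : List Bool} {y : ℕ → Bool} (hext : ExtL s y) {N' : ℕ}
    (hN : s.length ≤ N') :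
    s ++ List.ofFn (fun i : Fin (N' - s.length) => y (s.length + i)) = init y N' := by
  apply List.ext_getElem
  · simp [init]; omega
  · intro i h1 h2
    simp only [init, List.getElem_ofFn]
    rcases lt_or_ge i s.length with hi | hi
    · rw [List.getElem_append_left hi]
      exact (hext ⟨i, hi⟩).symm
    · rw [List.getElem_append_right hi]
      simp only [List.getElem_ofFn]
      congr 1
      omega

/-- Density lemma: for a dense open set `G` and string `s`, some extension's
cylinder lies in `G`. -/
lemma exists_ext_cyl_subset {G : Set (ℕ → Bool)} (hG : IsOpen G) (hd : Dense G)
    (s : List Bool) : ∃ t : List Bool, cyl (s ++ t) ⊆ G := by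
  obtain ⟨y, hyG, hys⟩ := hd.exists_mem_open (isOpen_cyl s) ⟨pt s, extL_pt s⟩
  obtain ⟨N, hN⟩ := cyl_init_subset hG hyG
  refine ⟨List.ofFn (fun i : Fin (max N s.length - s.length) => y (s.length + i)), ?_⟩
  rw [append_eq_init hys (le_max_right _ _)]
  exact (cyl_init_mono (le_max_left _ _)).trans hN

/-- the coding string for pair `(n, m)` -/
noncomputable def strW (x : ℕ → ℕ) (n m : ℕ) : List Bool :=
  enumList m ++ enumList (x (Nat.pair n m))

/-- the `n`-th closed layer of the universal set -/
noncomputable def layer (n : ℕ) : Set ((ℕ → ℕ) × (ℕ → Bool)) :=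
  {p | ∀ m, ¬ ExtL (strW p.1 n m) p.2}

lemma isClosed_layer (n : ℕ) : IsClosed (layer n) := by
  have heq : layer n = ⋂ m, (⋃ k, ({x : ℕ → ℕ | x (Nat.pair n m) = k} ×ˢ
      cyl (enumList m ++ enumList k)))ᶜ := by
    ext p
    simp only [layer, Set.mem_setOf_eq, Set.mem_iInter, Set.mem_compl_iff, Set.mem_iUnion,
      Set.mem_prod, Set.mem_setOf_eq, cyl, not_exists, not_and, strW]
    constructor
    · rintro h m k rfl
      exact h m
    · intro h m
      exact h m _ rfl
  rw [heq]
  refine isClosed_iInter fun m => (IsOpen.isClosed_compl ?_)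
  refine isOpen_iUnion fun k => IsOpen.prod ?_ (isOpen_cyl _)
  have : {x : ℕ → ℕ | x (Nat.pair n m) = k} =
      (fun x : ℕ → ℕ => x (Nat.pair n m)) ⁻¹' {k} := by ext; simp
  rw [this]
  exact (continuous_apply _).isOpen_preimage _ (isOpen_discrete _)

/-- the section of the `n`-th layer at `x` -/
noncomputable def Fset (x : ℕ → ℕ) (n : ℕ) : Set (ℕ → Bool) :=
  {y | ∀ m, ¬ ExtL (strW x n m) y}

lemma isClosed_Fset (x : ℕ → ℕ) (n : ℕ) : IsClosed (Fset x n) := by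
  have : Fset x n = (fun y => ((x, y) : (ℕ → ℕ) × (ℕ → Bool))) ⁻¹' layer n := by
    ext y; simp [Fset, layer]
  rw [this]
  exact (isClosed_layer n).preimage (Continuous.prodMk_right x)

lemma dense_compl_Fset (x : ℕ → ℕ) (n : ℕ) : Dense (Fset x n)ᶜ := by
  rw [dense_iff_inter_open]
  rintro V hV ⟨y, hy⟩
  obtain ⟨N, hN⟩ := cyl_init_subset hV hy
  set m := Encodable.encode (init y N) with hm
  refine ⟨pt (strW x n m), hN ?_, ?_⟩
  · have : strW x n m = init y N ++ enumList (x (Nat.pair n m)) := by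
      rw [strW, hm, enumList_surj]
    have h1 : ExtL (init y N ++ enumList (x (Nat.pair n m))) (pt (strW x n m)) := by
      rw [← this]; exact extL_pt _
    exact extL_append_left h1
  · intro hmem
    exact hmem m (extL_pt _)

lemma isMeagre_Fset (x : ℕ → ℕ) (n : ℕ) : IsMeagre (Fset x n) := by
  have hnd : IsNowhereDense (Fset x n) := by
    rw [(isClosed_Fset x n).isNowhereDense_iff, interior_eq_empty_iff_dense_compl]
    exact dense_compl_Fset x n
  rw [isMeagre_iff_countable_union_isNowhereDense]
  exact ⟨{Fset x n}, by simpa using hnd, Set.countable_singleton _, by simp⟩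

/-- A set is F_σ if it is a countable union of closed sets. -/
def IsFsigma {X : Type*} [TopologicalSpace X] (s : Set X) : Prop :=
  ∃ F : ℕ → Set X, (∀ n, IsClosed (F n)) ∧ s = ⋃ n, F n

/-- There is an F_σ set `U ⊆ ω^ω × 2^ω` universal for the meager ideal on
Cantor space: every section is meager and every meager subset of `2^ω` is
contained in some section. -/
theorem exists_Fsigma_universal_meager_cantor :
    ∃ U : Set ((ℕ → ℕ) × (ℕ → Bool)), IsFsigma U ∧
      (∀ x : ℕ → ℕ, IsMeagre {y : ℕ → Bool | (x, y) ∈ U}) ∧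
      ∀ A : Set (ℕ → Bool), IsMeagre A → ∃ x : ℕ → ℕ, A ⊆ {y : ℕ → Bool | (x, y) ∈ U} := by
  refine ⟨⋃ n, layer n, ⟨layer, isClosed_layer, rfl⟩, ?_, ?_⟩
  · intro x
    have : {y : ℕ → Bool | (x, y) ∈ ⋃ n, layer n} = ⋃ n, Fset x n := by
      ext y; simp [layer, Fset]
    rw [this]
    exact isMeagre_iUnion (isMeagre_Fset x)
  · intro A hA
    rw [isMeagre_iff_countable_union_isNowhereDense] at hA
    obtain ⟨S, hSnd, hScnt, hSsub⟩ := hA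
    obtain ⟨f, hf⟩ := (hScnt.insert ∅).exists_eq_range (Set.insert_nonempty _ _)
    have hfnd : ∀ n, IsNowhereDense (f n) := by
      intro n
      have : f n ∈ insert ∅ S := hf ▸ Set.mem_range_self n
      rcases this with h | h
      · rw [h]; exact isNowhereDense_empty
      · exact hSnd _ h
    set G : ℕ → Set (ℕ → Bool) := fun n => closure (f n) with hG
    have hGnd : ∀ n, IsClosed (G n) ∧ IsNowhereDense (G n) :=
      fun n => ⟨isClosed_closure, (hfnd n).closure⟩
    have hGc : ∀ n, IsOpen (G n)ᶜ ∧ Dense (G n)ᶜ :=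
      fun n => isClosed_isNowhereDense_iff_compl.mp (hGnd n)
    choose t ht using fun n m =>
      exists_ext_cyl_subset (hGc n).1 (hGc n).2 (enumList m)
    set x : ℕ → ℕ := fun k => Encodable.encode (t (Nat.unpair k).1 (Nat.unpair k).2) with hx
    have hstr : ∀ n m, strW x n m = enumList m ++ t n m := by
      intro n m
      rw [strW, hx]
      simp [Nat.unpair_pair, enumList_surj]
    refine ⟨x, fun y hy => ?_⟩
    have : y ∈ ⋃₀ insert ∅ S := Set.sUnion_mono (Set.subset_insert _ _) (hSsub hy)
    rw [hf, Set.sUnion_range] at this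
    obtain ⟨n, hn⟩ := Set.mem_iUnion.mp this
    have hyG : y ∈ G n := subset_closure hn
    refine Set.mem_iUnion.mpr ⟨n, fun m hext => ?_⟩
    have : y ∈ cyl (enumList m ++ t n m) := by rw [← hstr n m]; exact hext
    exact ht n m this hyG
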